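/- Suppose Rev : [v̲, v̄] → ℝ is unimodal with maximizer r ∈ [a_N, b_N] ⊆ [v̲, v̄], where b_N − a_N = (v̄ − v̲)·(2/3)^N, Rev(p) = p · F̄(p⁻) with F̄ a ccdf taking values in [0,1], and Rev(r) ≥ v̲ > 0, and F̄ non-increasing. Then 1 − Rev(a_N)/Rev(r) ≤ ((v̄ − v̲)/v̲) · (2/3)^N. Consequently, for N ≥ log((v̄ − v̲)/(v̲·ε))/log(3/2), the price a_N achieves at least a (1−ε) fraction of the optimal revenue. -/

import Mathlib

/-- Ternary-search guarantee: with Rev(p) = p·F̄(p⁻), the price a_N achieves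
1 − Rev(a_N)/Rev(r) ≤ ((v̄−v̲)/v̲)(2/3)^N, hence a (1−ε) fraction of the optimum once
N ≥ log((v̄−v̲)/(v̲·ε))/log(3/2). -/
theorem stmt10 (vlo vhi aN bN r : ℝ) (N : ℕ) (Fl : ℝ → ℝ)
    (hvlo : 0 < vlo) (hvv : vlo < vhi)
    (hsub : Set.Icc aN bN ⊆ Set.Icc vlo vhi) (hr : r ∈ Set.Icc aN bN)
    (hlen : bN - aN = (vhi - vlo) * (2 / 3 : ℝ) ^ N)
    (hanti : AntitoneOn Fl (Set.Icc vlo vhi))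
    (hrange : ∀ v ∈ Set.Icc vlo vhi, Fl v ∈ Set.Icc (0 : ℝ) 1)
    (hopt : ∀ p ∈ Set.Icc vlo vhi, p * Fl p ≤ r * Fl r)
    (hRevr : vlo ≤ r * Fl r) :
    1 - (aN * Fl aN) / (r * Fl r) ≤ ((vhi - vlo) / vlo) * (2 / 3 : ℝ) ^ N ∧
    (∀ ε : ℝ, 0 < ε →
      Real.log ((vhi - vlo) / (vlo * ε)) / Real.log (3 / 2) ≤ (N : ℝ) →
      (1 - ε) * (r * Fl r) ≤ aN * Fl aN) := by
  obtain ⟨har, hrb⟩ := hr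
  have hab : aN ≤ bN := le_trans har hrb
  have haI : aN ∈ Set.Icc vlo vhi := hsub ⟨le_refl _, hab⟩
  have hrI : r ∈ Set.Icc vlo vhi := hsub ⟨har, hrb⟩
  have hFr := hrange r hrI
  have hFa := hrange aN haI
  have hFar : Fl r ≤ Fl aN := hanti haI hrI har
  have hvloa : vlo ≤ aN := haI.1
  have haNpos : 0 < aN := lt_of_lt_of_le hvlo hvloa
  have hrpos : 0 < r * Fl r := lt_of_lt_of_le hvlo hRevr
  -- key chain
  have hkey : r * Fl r - aN * Fl aN ≤ bN - aN := by
    have h1 : r * Fl r - aN * Fl aN ≤ (r - aN) * Fl r := by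
      have : aN * Fl r ≤ aN * Fl aN :=
        mul_le_mul_of_nonneg_left hFar (le_of_lt haNpos)
      nlinarith
    have h2 : (r - aN) * Fl r ≤ bN - aN := by
      nlinarith [hFr.1, hFr.2, sub_nonneg.mpr har]
    linarith
  have hnum : 0 ≤ r * Fl r - aN * Fl aN := by
    have := hopt aN haI; linarith
  have hmain : 1 - (aN * Fl aN) / (r * Fl r) ≤ ((vhi - vlo) / vlo) * (2 / 3 : ℝ) ^ N := by
    rw [sub_le_iff_le_add]
    have h3 : 1 ≤ (aN * Fl aN + (bN - aN)) / (r * Fl r) := by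
      rw [le_div_iff₀ hrpos]; linarith
    have h4 : (aN * Fl aN + (bN - aN)) / (r * Fl r)
        ≤ (aN * Fl aN) / (r * Fl r) + (bN - aN) / vlo := by
      rw [add_div]
      have : (bN - aN) / (r * Fl r) ≤ (bN - aN) / vlo :=
        div_le_div_of_nonneg_left (by linarith) hvlo hRevr
      linarith
    have h5 : (bN - aN) / vlo = ((vhi - vlo) / vlo) * (2 / 3 : ℝ) ^ N := by
      rw [hlen]; ring
    calc 1 ≤ (aN * Fl aN + (bN - aN)) / (r * Fl r) := h3
      _ ≤ (aN * Fl aN) / (r * Fl r) + (bN - aN) / vlo := h4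
      _ = ((vhi - vlo) / vlo) * (2 / 3 : ℝ) ^ N + (aN * Fl aN) / (r * Fl r) := by
          rw [h5]; ring
  refine ⟨hmain, fun ε hε hN => ?_⟩
  -- show ((vhi-vlo)/vlo)*(2/3)^N ≤ ε
  have hX : (0 : ℝ) < (vhi - vlo) / (vlo * ε) := div_pos (by linarith) (by positivity)
  have hlog32 : (0 : ℝ) < Real.log (3 / 2) := Real.log_pos (by norm_num)
  have hlogle : Real.log ((vhi - vlo) / (vlo * ε)) ≤ (N : ℝ) * Real.log (3 / 2) := by
    rw [div_le_iff₀ hlog32] at hN; linarith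
  have hXle : (vhi - vlo) / (vlo * ε) ≤ (3 / 2 : ℝ) ^ N := by
    have := Real.log_le_log_iff hX (pow_pos (by norm_num : (0:ℝ) < 3/2) N)
    rw [← this, Real.log_pow]; exact hlogle
  have hbound : ((vhi - vlo) / vlo) * (2 / 3 : ℝ) ^ N ≤ ε := by
    have h23 : (2 / 3 : ℝ) ^ N = ((3 / 2 : ℝ) ^ N)⁻¹ := by
      rw [← inv_pow]; norm_num
    rw [h23]
    rw [div_le_iff₀ (mul_pos hvlo hε)] at hXle
    have hpow : (0 : ℝ) < (3 / 2 : ℝ) ^ N := pow_pos (by norm_num) N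
    rw [div_mul_eq_mul_div, div_le_iff₀ hvlo]
    nlinarith [mul_le_mul_of_nonneg_right hXle (le_of_lt (inv_pos.mpr hpow)),
      mul_inv_cancel₀ (ne_of_gt hpow)]
  have : 1 - (aN * Fl aN) / (r * Fl r) ≤ ε := le_trans hmain hbound
  have h6 : (1 - ε) ≤ (aN * Fl aN) / (r * Fl r) := by linarith
  calc (1 - ε) * (r * Fl r) ≤ ((aN * Fl aN) / (r * Fl r)) * (r * Fl r) :=
        mul_le_mul_of_nonneg_right h6 (le_of_lt hrpos)
    _ = aN * Fl aN := by rw [div_mul_cancel₀]; exact ne_of_gt hrpos
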